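/- Suppose a quiver Q admits an attractor solution, i.e., points (r⃗_i)_{i∈Q0} in ℝ³ with pairwise distinct positions along arrows, such that for every vertex i: Σ_{a:i→j} (1 + 1/r_{ij}) − Σ_{a:j→i} (1 + 1/r_{ij}) = 0 where r_{ij} = |r⃗_i − r⃗_j|. Then for every weak cut I of Q one has the strict inequality |I| < |Q1 − I| whenever some simple cycle contains no arrow of I, and in general |I| ≤ |Q1 − I|. -/

import Mathlib

open Relation

/-- One directed step along an arrow of the quiver. -/
def QStep {V A : Type} (s t : A → V) (i j : V) : Prop := ∃ a : A, s a = i ∧ t a = j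

/-- One undirected step along an arrow of the quiver. -/
def UStep {V A : Type} (s t : A → V) (i j : V) : Prop :=
  ∃ a : A, (s a = i ∧ t a = j) ∨ (s a = j ∧ t a = i)

/-- A current is conserved if at each vertex the incoming total equals the outgoing total. -/
def Conserved {V A : Type} [Fintype A] [DecidableEq V] (s t : A → V) (lam : A → ℝ) : Prop :=
  ∀ i : V, ∑ a ∈ Finset.univ.filter (fun a => t a = i), lam a
         = ∑ a ∈ Finset.univ.filter (fun a => s a = i), lam a

/-- A simple oriented cycle of the quiver: a nonempty cyclically composable list of arrows
whose sources are pairwise distinct. -/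
structure SimpleCycle {V A : Type} (s t : A → V) where
  arrows : List A
  nonempty : arrows ≠ []
  chain : ∀ k : ℕ, ∀ h : k < arrows.length,
    t (arrows.get ⟨k, h⟩) =
      s (arrows.get ⟨(k + 1) % arrows.length, Nat.mod_lt _ (List.length_pos_iff.mpr nonempty)⟩)
  simple : (arrows.map s).Nodup

/-- A cut: every simple oriented cycle contains exactly one arrow of `I`. -/
def IsCut {V A : Type} [DecidableEq A] (s t : A → V) (I : Finset A) : Prop :=
  ∀ w : SimpleCycle s t, (w.arrows.filter (fun a => decide (a ∈ I))).length = 1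

/-- A weak cut: every simple oriented cycle contains at most one arrow of `I`. -/
def IsWeakCut {V A : Type} [DecidableEq A] (s t : A → V) (I : Finset A) : Prop :=
  ∀ w : SimpleCycle s t, (w.arrows.filter (fun a => decide (a ∈ I))).length ≤ 1

/-- An R-charge: a real function on arrows summing to 2 around every simple oriented cycle. -/
def IsRCharge {V A : Type} (s t : A → V) (R : A → ℝ) : Prop :=
  ∀ w : SimpleCycle s t, (w.arrows.map R).sum = 2

lemma mu_eq {x : ℝ} (hx : 0 < x) : (1 + x⁻¹)⁻¹ = x / (1 + x) := by
  rw [inv_eq_iff_eq_inv]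
  field_simp
  ring

lemma mu_pos {x : ℝ} (hx : 0 < x) : 0 < (1 + x⁻¹)⁻¹ := by positivity

lemma mu_le_one {x : ℝ} (hx : 0 < x) : (1 + x⁻¹)⁻¹ ≤ 1 := by
  rw [inv_le_one_iff₀]
  right; have : 0 < x⁻¹ := by positivity
  linarith

lemma mu_mono {x y : ℝ} (hx : 0 < x) (hxy : x ≤ y) : (1 + x⁻¹)⁻¹ ≤ (1 + y⁻¹)⁻¹ := by
  have hy : 0 < y := lt_of_lt_of_le hx hxy
  apply inv_anti₀
  · positivity
  · have := inv_anti₀ hx hxy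
    linarith

lemma mu_sum_ineq {ι : Type} [DecidableEq ι] (T : Finset ι) (d : ι → ℝ)
    (hpos : ∀ j ∈ T, 0 < d j) {x : ℝ} (hx : 0 < x) (hle : x ≤ ∑ j ∈ T, d j) :
    (1 + x⁻¹)⁻¹ ≤ ∑ j ∈ T, (1 + (d j)⁻¹)⁻¹ := by
  set S := ∑ j ∈ T, d j with hS
  have hSpos : 0 < S := lt_of_lt_of_le hx hle
  calc (1 + x⁻¹)⁻¹ ≤ (1 + S⁻¹)⁻¹ := mu_mono hx hle
    _ = S / (1 + S) := mu_eq hSpos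
    _ = ∑ j ∈ T, d j / (1 + S) := by rw [hS, Finset.sum_div]
    _ ≤ ∑ j ∈ T, (1 + (d j)⁻¹)⁻¹ := by
        apply Finset.sum_le_sum
        intro j hj
        rw [mu_eq (hpos j hj)]
        have hdj : d j ≤ S := Finset.single_le_sum (fun i hi => (hpos i hi).le) hj
        have hdj0 := hpos j hj
        apply div_le_div_of_nonneg_left (hpos j hj).le (by linarith) (by linarith)

open Fin.NatCast Fin.CommRing

section Poly
variable {E : Type} [PseudoMetricSpace E]

lemma fin_rot_sum {L : ℕ} [NeZero L] (hL : 2 ≤ L) (k : Fin L) (d : Fin L → ℝ) :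
    ∑ i ∈ Finset.range (L - 1), d (k + 1 + (i : Fin L)) = ∑ j ∈ Finset.univ.erase k, d j := by
  have hcast : ∀ x : Fin L, x.val = L - 1 → x = ((L-1 : ℕ) : Fin L) := by
    intro x hx
    apply Fin.ext
    rw [Fin.val_natCast, Nat.mod_eq_of_lt (by omega), hx]
  have hL1 : (1 : Fin L) + ((L-1 : ℕ) : Fin L) = 0 := by
    have : ((1 : ℕ) : Fin L) + ((L-1 : ℕ) : Fin L) = ((L : ℕ) : Fin L) := by
      rw [← Nat.cast_add]; congr 1; omega
    rw [Fin.natCast_self] at this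
    simpa using this
  have hback : k + 1 + ((L-1 : ℕ) : Fin L) = k := by
    rw [add_assoc, hL1, add_zero]
  refine Finset.sum_nbij' (fun m => k + 1 + (m : Fin L)) (fun j => (j - (k+1)).val) ?_ ?_ ?_ ?_ ?_
  · intro m hm
    simp only [Finset.mem_range] at hm
    simp only [Finset.mem_erase, Finset.mem_univ, and_true]
    intro hEq
    have : (1 : Fin L) + (m : Fin L) = 0 := by
      have := hEq
      rw [add_assoc] at this
      exact (add_eq_left).mp this
    have h2 : (((m+1 : ℕ)) : Fin L) = 0 := by
      rw [Nat.cast_add, Nat.cast_one, add_comm]; exact this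
    rw [Fin.natCast_eq_zero] at h2
    have := Nat.le_of_dvd (by omega) h2
    omega
  · intro j hj
    simp only [Finset.mem_erase, Finset.mem_univ, and_true] at hj
    simp only [Finset.mem_range]
    have hval : (j - (k+1)).val < L := (j - (k+1)).isLt
    have : (j - (k+1)).val ≠ L - 1 := by
      intro hx
      apply hj
      have := hcast _ hx
      have h2 : j = k + 1 + (j - (k+1)) := by ring
      rw [this] at h2
      rw [h2, hback]
    omega
  · intro m hm
    simp only [Finset.mem_range] at hm
    show ((k + 1 + (m : Fin L) - (k + 1)).val) = m
    have : k + 1 + (m : Fin L) - (k + 1) = (m : Fin L) := by ring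
    rw [this, Fin.val_natCast, Nat.mod_eq_of_lt (by omega)]
  · intro j _
    show k + 1 + (((j - (k+1)).val : ℕ) : Fin L) = j
    rw [Fin.cast_val_eq_self]
    ring
  · intro m _; rfl

lemma polygon {L : ℕ} [NeZero L] (hL : 2 ≤ L) (p : Fin L → E) (k : Fin L) :
    dist (p k) (p (k + 1)) ≤ ∑ j ∈ Finset.univ.erase k, dist (p j) (p (j + 1)) := by
  set d : Fin L → ℝ := fun j => dist (p j) (p (j + 1)) with hd
  rw [← fin_rot_sum hL k d]
  have hq := dist_le_range_sum_dist (fun m : ℕ => p (k + 1 + (m : Fin L))) (L - 1)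
  have h0 : k + 1 + ((0:ℕ) : Fin L) = k + 1 := by simp
  have hback : k + 1 + ((L-1 : ℕ) : Fin L) = k := by
    have hL1 : (1 : Fin L) + ((L-1 : ℕ) : Fin L) = 0 := by
      have : ((1 : ℕ) : Fin L) + ((L-1 : ℕ) : Fin L) = ((L : ℕ) : Fin L) := by
        rw [← Nat.cast_add]; congr 1; omega
      rw [Fin.natCast_self] at this
      simpa using this
    rw [add_assoc, hL1, add_zero]
  rw [h0, hback] at hq
  rw [dist_comm] at hq
  refine hq.trans (le_of_eq ?_)
  apply Finset.sum_congr rfl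
  intro m hm
  have : k + 1 + ((m+1 : ℕ) : Fin L) = (k + 1 + (m : Fin L)) + 1 := by
    rw [Nat.cast_add, Nat.cast_one]; ring
  rw [this]

end Poly
set_option linter.unusedSectionVars false

section Aux
variable {V A : Type} [Fintype V] [Fintype A] [DecidableEq V] [DecidableEq A] {s t : A → V}

lemma cyc_len_pos (w : SimpleCycle s t) : 0 < w.arrows.length :=
  List.length_pos_iff.mpr w.nonempty

lemma cyc_nezero (w : SimpleCycle s t) : NeZero w.arrows.length := ⟨(cyc_len_pos w).ne'⟩

lemma cyc_nodup (w : SimpleCycle s t) : w.arrows.Nodup := w.simple.of_map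

lemma cyc_chain (w : SimpleCycle s t) [NeZero w.arrows.length] (k : Fin w.arrows.length) :
    t (w.arrows.get k) = s (w.arrows.get (k + 1)) := by
  have h := w.chain k.val k.isLt
  convert h using 3
  ext
  show ((k + 1 : Fin _)).val = (k.val + 1) % w.arrows.length
  rw [Fin.val_add]
  show (k.val + (1 % w.arrows.length)) % w.arrows.length = (k.val + 1) % w.arrows.length
  rw [Nat.add_mod_mod]

lemma cyc_sum_toFinset (w : SimpleCycle s t) (f : A → ℝ) :
    ∑ a ∈ w.arrows.toFinset, f a = ∑ k : Fin w.arrows.length, f (w.arrows.get k) := by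
  rw [List.sum_toFinset _ (cyc_nodup w), ← Fin.sum_univ_fun_getElem w.arrows f]
  simp [List.get_eq_getElem]


variable (r : V → EuclideanSpace ℝ (Fin 3))

lemma cyc_two_le (hd : ∀ a : A, r (s a) ≠ r (t a)) (w : SimpleCycle s t) :
    2 ≤ w.arrows.length := by
  have h1 := cyc_len_pos w
  by_contra h
  have hL : w.arrows.length = 1 := by omega
  haveI : NeZero w.arrows.length := ⟨by omega⟩
  have h2 := cyc_chain w ⟨0, by omega⟩
  have hmod : ∀ n : ℕ, n % w.arrows.length = 0 := by
    intro n; rw [hL]; exact Nat.mod_one n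
  have h3 : (⟨0, by omega⟩ + 1 : Fin w.arrows.length) = ⟨0, by omega⟩ := by
    apply Fin.ext
    rw [Fin.val_add, hmod]
  rw [h3] at h2
  exact hd _ (by rw [h2])

lemma cyc_polygon_mu (hd : ∀ a : A, r (s a) ≠ r (t a)) (w : SimpleCycle s t)
    [NeZero w.arrows.length] (k0 : Fin w.arrows.length) :
    (1 + (dist (r (s (w.arrows.get k0))) (r (t (w.arrows.get k0))))⁻¹)⁻¹
      ≤ ∑ j ∈ Finset.univ.erase k0,
          (1 + (dist (r (s (w.arrows.get j))) (r (t (w.arrows.get j))))⁻¹)⁻¹ := by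
  have hL := cyc_two_le r hd w
  set p : Fin w.arrows.length → EuclideanSpace ℝ (Fin 3) := fun k => r (s (w.arrows.get k)) with hp
  have hdp : ∀ k : Fin w.arrows.length,
      dist (r (s (w.arrows.get k))) (r (t (w.arrows.get k))) = dist (p k) (p (k+1)) := by
    intro k
    rw [hp]
    simp only
    rw [cyc_chain w k]
  have hpoly := polygon hL p k0
  apply mu_sum_ineq
  · intro j _
    rw [dist_pos]
    exact hd _
  · rw [dist_pos]
    exact hd _
  · rw [hdp k0]
    refine hpoly.trans (le_of_eq ?_)
    apply Finset.sum_congr rfl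
    intro j _
    rw [hdp j]

lemma cyc_g_nonneg (hd : ∀ a : A, r (s a) ≠ r (t a)) (I : Finset A)
    (hwc : IsWeakCut s t I) (w : SimpleCycle s t) :
    0 ≤ ∑ a ∈ w.arrows.toFinset,
      (if a ∈ I then -(1 + (dist (r (s a)) (r (t a)))⁻¹)⁻¹
        else (1 + (dist (r (s a)) (r (t a)))⁻¹)⁻¹) := by
  haveI := cyc_nezero w
  set mu : A → ℝ := fun a => (1 + (dist (r (s a)) (r (t a)))⁻¹)⁻¹ with hmu
  have hmupos : ∀ a, 0 < mu a := by
    intro a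
    apply mu_pos
    rw [dist_pos]
    exact hd _
  rw [cyc_sum_toFinset]
  set J : Finset (Fin w.arrows.length) := Finset.univ.filter (fun k => w.arrows.get k ∈ I) with hJ
  have hJcard : J.card ≤ 1 := by
    have h1 : (Finset.image (w.arrows.get) J).card = J.card :=
      Finset.card_image_of_injOn (fun a _ b _ h => (cyc_nodup w).get_inj_iff.mp h)
    have h2 : Finset.image (w.arrows.get) J ⊆ (w.arrows.filter (fun a => decide (a ∈ I))).toFinset := by
      intro a ha
      rw [Finset.mem_image] at ha
      obtain ⟨k, hk, rfl⟩ := ha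
      rw [List.mem_toFinset, List.mem_filter]
      refine ⟨w.arrows.get_mem _, ?_⟩
      simp only [decide_eq_true_eq]
      rw [hJ] at hk
      exact (Finset.mem_filter.mp hk).2
    calc J.card = (Finset.image (w.arrows.get) J).card := h1.symm
      _ ≤ (w.arrows.filter (fun a => decide (a ∈ I))).toFinset.card := Finset.card_le_card h2
      _ ≤ (w.arrows.filter (fun a => decide (a ∈ I))).length := (w.arrows.filter (fun a => decide (a ∈ I))).toFinset_card_le
      _ ≤ 1 := hwc w
  by_cases hJe : J = ∅
  · apply Finset.sum_nonneg
    intro k _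
    have hkI : w.arrows.get k ∉ I := by
      intro hmem
      have : k ∈ J := by
        rw [hJ, Finset.mem_filter]
        exact ⟨Finset.mem_univ k, hmem⟩
      rw [hJe] at this
      simp at this
    rw [if_neg hkI]
    exact (hmupos _).le
  · have hJ1 : J.card = 1 := by
      have := Finset.card_pos.mpr (Finset.nonempty_of_ne_empty hJe)
      omega
    obtain ⟨k0, hk0⟩ := Finset.card_eq_one.mp hJ1
    have hk0I : w.arrows.get k0 ∈ I := by
      have : k0 ∈ J := by rw [hk0]; exact Finset.mem_singleton_self k0
      rw [hJ] at this
      exact (Finset.mem_filter.mp this).2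
    have herase : ∀ k ∈ Finset.univ.erase k0, w.arrows.get k ∉ I := by
      intro k hk hmem
      have hkJ : k ∈ J := by
        rw [hJ, Finset.mem_filter]
        exact ⟨Finset.mem_univ k, hmem⟩
      rw [hk0, Finset.mem_singleton] at hkJ
      exact (Finset.mem_erase.mp hk).1 hkJ
    rw [← Finset.add_sum_erase _ _ (Finset.mem_univ k0), if_pos hk0I]
    have hsum : ∑ k ∈ Finset.univ.erase k0,
        (if w.arrows.get k ∈ I then -mu (w.arrows.get k) else mu (w.arrows.get k))
        = ∑ k ∈ Finset.univ.erase k0, mu (w.arrows.get k) := by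
      apply Finset.sum_congr rfl
      intro k hk
      rw [if_neg (herase k hk)]
    rw [hsum]
    have := cyc_polygon_mu r hd w k0
    rw [hmu]
    simp only
    linarith [this]

lemma card_filter_get (w : SimpleCycle s t) (f : A → V) (i : V) :
    (w.arrows.toFinset.filter (fun a => f a = i)).card
      = (Finset.univ.filter (fun k : Fin w.arrows.length => f (w.arrows.get k) = i)).card := by
  apply (Finset.card_bij (fun k _ => w.arrows.get k) ?_ ?_ ?_).symm
  · intro k hk
    rw [Finset.mem_filter] at hk ⊢
    exact ⟨List.mem_toFinset.mpr (w.arrows.get_mem _), hk.2⟩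
  · intro a ha b hb h
    exact (cyc_nodup w).get_inj_iff.mp h
  · intro a ha
    rw [Finset.mem_filter, List.mem_toFinset] at ha
    obtain ⟨k, hk⟩ := List.mem_iff_get.mp ha.1
    exact ⟨k, Finset.mem_filter.mpr ⟨Finset.mem_univ _, by rw [hk]; exact ha.2⟩, hk⟩

lemma indicator_conserved (w : SimpleCycle s t) (c : ℝ) :
    Conserved s t (fun a => if a ∈ w.arrows.toFinset then c else 0) := by
  haveI := cyc_nezero w
  intro i
  have key : ∀ f : A → V,
      ∑ a ∈ Finset.univ.filter (fun a => f a = i), (if a ∈ w.arrows.toFinset then c else 0)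
        = c * (w.arrows.toFinset.filter (fun a => f a = i)).card := by
    intro f
    rw [Finset.sum_ite_mem]
    rw [Finset.sum_const]
    have : Finset.filter (fun a => f a = i) Finset.univ ∩ w.arrows.toFinset
        = Finset.filter (fun a => f a = i) w.arrows.toFinset := by
      ext a
      simp [Finset.mem_filter, Finset.mem_inter, and_comm]
    rw [this, nsmul_eq_mul, mul_comm]
  rw [key t, key s, card_filter_get w t i, card_filter_get w s i]
  congr 1
  norm_cast
  apply Finset.card_nbij' (fun k => k + 1) (fun k => k - 1)
  · intro k hk
    rw [Finset.mem_coe, Finset.mem_filter] at hk ⊢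
    exact ⟨Finset.mem_univ _, by rw [← cyc_chain w k]; exact hk.2⟩
  · intro k hk
    rw [Finset.mem_coe, Finset.mem_filter] at hk ⊢
    refine ⟨Finset.mem_univ _, ?_⟩
    rw [cyc_chain w (k - 1)]
    have : k - 1 + 1 = k := by ring
    rw [this]
    exact hk.2
  · intro k _
    show k + 1 - 1 = k
    ring
  · intro k _
    show k - 1 + 1 = k
    ring

lemma exists_cycle_in_support (lam : A → ℝ) (hcons : Conserved s t lam)
    (hnn : ∀ a, 0 ≤ lam a) {a0 : A} (ha0 : 0 < lam a0) :
    ∃ w : SimpleCycle s t, ∀ a ∈ w.arrows, 0 < lam a := by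
  classical
  have hstep : ∀ a : A, 0 < lam a → ∃ b : A, 0 < lam b ∧ s b = t a := by
    intro a ha
    have hmem : a ∈ Finset.univ.filter (fun b => t b = t a) := by
      rw [Finset.mem_filter]; exact ⟨Finset.mem_univ _, rfl⟩
    have hin : 0 < ∑ b ∈ Finset.univ.filter (fun b => t b = t a), lam b :=
      lt_of_lt_of_le ha (Finset.single_le_sum (fun b _ => hnn b) hmem)
    rw [hcons (t a)] at hin
    by_contra h
    push_neg at h
    have : ∑ b ∈ Finset.univ.filter (fun b => s b = t a), lam b ≤ 0 := by
      apply Finset.sum_nonpos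
      intro b hb
      rw [Finset.mem_filter] at hb
      by_contra hb2
      push_neg at hb2
      exact absurd hb.2 (by intro _; exact absurd hb2 (not_lt.mpr (le_of_not_gt (fun hlt => (h b hlt) hb.2))))
    linarith
  set F := {a : A // 0 < lam a} with hF
  have hnext : ∀ p : F, ∃ q : F, s q.1 = t p.1 := by
    intro p
    obtain ⟨b, hb1, hb2⟩ := hstep p.1 p.2
    exact ⟨⟨b, hb1⟩, hb2⟩
  set next : F → F := fun p => (hnext p).choose with hnextdef
  have hnextspec : ∀ p : F, s (next p).1 = t p.1 := fun p => (hnext p).choose_spec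
  set seq : ℕ → F := fun n => next^[n] ⟨a0, ha0⟩ with hseq
  have hseqsucc : ∀ n, seq (n + 1) = next (seq n) := by
    intro n
    rw [hseq]
    simp only
    rw [Function.iterate_succ_apply']
  have hchain : ∀ n, t (seq n).1 = s (seq (n + 1)).1 := by
    intro n
    rw [hseqsucc n, hnextspec]
  set vseq : ℕ → V := fun n => s (seq n).1 with hvseq
  have hex : ∃ n, ∃ m < n, vseq m = vseq n := by
    obtain ⟨m, n, hmn, heq⟩ := Finite.exists_ne_map_eq_of_infinite vseq
    rcases lt_or_gt_of_ne hmn with h | h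
    · exact ⟨n, m, h, heq⟩
    · exact ⟨m, n, h, heq.symm⟩
  set l := Nat.find hex with hl
  obtain ⟨k, hkl, hvkl⟩ := Nat.find_spec hex
  have hmin : ∀ j < l, ¬ ∃ m < j, vseq m = vseq j := fun j hj => Nat.find_min hex hj
  set L := l - k with hLdef
  have hLpos : 0 < L := by omega
  set as : List A := (List.range L).map (fun m => (seq (k + m)).1) with has
  have hlen : as.length = L := by rw [has]; simp
  have hget : ∀ (j : ℕ) (h : j < as.length), as.get ⟨j, h⟩ = (seq (k + j)).1 := by
    intro j h
    have h' : j < ((List.range L).map (fun m => ((seq (k + m)).1 : A))).length := by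
      rw [List.length_map, List.length_range]
      omega
    have : as.get ⟨j, h⟩ = ((List.range L).map (fun m => ((seq (k + m)).1 : A))).get ⟨j, h'⟩ := by
      congr 1
    rw [this]
    simp [List.get_eq_getElem, List.getElem_map, List.getElem_range]
  refine ⟨⟨as, by rw [← List.length_pos_iff, hlen]; exact hLpos, ?_, ?_⟩, ?_⟩
  · intro j h
    rw [hget j h]
    have hj : j < L := by omega
    by_cases hjL : j + 1 < L
    · have : (j + 1) % as.length = j + 1 := Nat.mod_eq_of_lt (by omega)
      rw [hget _ _]
      · rw [this, ← Nat.add_assoc]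
        exact hchain (k + j)
    · have hj1 : j = L - 1 := by omega
      have : (j + 1) % as.length = 0 := by
        rw [hlen]
        have : j + 1 = L := by omega
        rw [this, Nat.mod_self]
      rw [hget _ _]
      · rw [this]
        have h1 : k + j + 1 = l := by omega
        have h2 : t (seq (k + j)).1 = s (seq l).1 := by rw [← h1]; exact hchain (k + j)
        rw [h2, show s (seq l).1 = vseq l from rfl, ← hvkl]
        rfl
  · show (as.map s).Nodup
    rw [has, List.map_map]
    have : (s ∘ fun m => (seq (k + m)).1) = fun m => vseq (k + m) := rfl
    rw [this]
    apply List.Nodup.map_on _ List.nodup_range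
    intro m1 h1 m2 h2 heq
    rw [List.mem_range] at h1 h2
    by_contra hne
    rcases lt_or_gt_of_ne hne with h | h
    · exact hmin (k + m2) (by omega) ⟨k + m1, by omega, heq⟩
    · exact hmin (k + m1) (by omega) ⟨k + m2, by omega, heq.symm⟩
  · intro a ha
    have ha' : a ∈ as := ha
    rw [has, List.mem_map] at ha'
    obtain ⟨m, _, rfl⟩ := ha'
    exact (seq (k + m)).2

lemma flow_pairing_nonneg (g : A → ℝ)
    (hcyc : ∀ w : SimpleCycle s t, 0 ≤ ∑ a ∈ w.arrows.toFinset, g a) :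
    ∀ n : ℕ, ∀ lam : A → ℝ, Conserved s t lam → (∀ a, 0 ≤ lam a) →
      (Finset.univ.filter (fun a => 0 < lam a)).card ≤ n → 0 ≤ ∑ a, g a * lam a := by
  intro n
  induction n with
  | zero =>
    intro lam hcons hnn hcard
    have hz : ∀ a, lam a = 0 := by
      intro a
      by_contra h
      have hpos : 0 < lam a := lt_of_le_of_ne (hnn a) (Ne.symm h)
      have : a ∈ Finset.univ.filter (fun a => 0 < lam a) := by
        rw [Finset.mem_filter]; exact ⟨Finset.mem_univ _, hpos⟩
      have := Finset.card_pos.mpr ⟨a, this⟩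
      omega
    have : ∀ a ∈ Finset.univ, g a * lam a = 0 := by
      intro a _; rw [hz a, mul_zero]
    rw [Finset.sum_congr rfl this, Finset.sum_const_zero]
  | succ n ih =>
    intro lam hcons hnn hcard
    by_cases hzero : ∀ a, lam a = 0
    · have : ∀ a ∈ Finset.univ, g a * lam a = 0 := by
        intro a _; rw [hzero a, mul_zero]
      rw [Finset.sum_congr rfl this, Finset.sum_const_zero]
    · push_neg at hzero
      obtain ⟨a0, ha0⟩ := hzero
      have ha0pos : 0 < lam a0 := lt_of_le_of_ne (hnn a0) (Ne.symm ha0)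
      obtain ⟨w, hw⟩ := exists_cycle_in_support lam hcons hnn ha0pos
      set T := w.arrows.toFinset with hT
      have hTne : T.Nonempty := by
        obtain ⟨a, ha⟩ := List.exists_mem_of_ne_nil w.arrows w.nonempty
        exact ⟨a, List.mem_toFinset.mpr ha⟩
      set eps := T.inf' hTne lam with heps
      have hepspos : 0 < eps := by
        rw [heps, Finset.lt_inf'_iff]
        intro b hb
        exact hw b (List.mem_toFinset.mp hb)
      set lam' : A → ℝ := fun a => lam a - (if a ∈ T then eps else 0) with hlam'
      have hcons' : Conserved s t lam' := by
        intro i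
        rw [hlam']
        simp only
        rw [Finset.sum_sub_distrib, Finset.sum_sub_distrib, hcons i, indicator_conserved w eps i]
      have hnn' : ∀ a, 0 ≤ lam' a := by
        intro a
        rw [hlam']
        simp only
        by_cases haT : a ∈ T
        · rw [if_pos haT]
          have := Finset.inf'_le lam haT
          rw [← heps] at this
          linarith
        · rw [if_neg haT, sub_zero]
          exact hnn a
      have hsubset : Finset.univ.filter (fun a => 0 < lam' a) ⊆ Finset.univ.filter (fun a => 0 < lam a) := by
        intro a ha
        rw [Finset.mem_filter] at ha ⊢
        refine ⟨Finset.mem_univ _, ?_⟩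
        rw [hlam'] at ha
        simp only at ha
        by_cases haT : a ∈ T
        · rw [if_pos haT] at ha
          linarith [ha.2, hepspos]
        · rw [if_neg haT, sub_zero] at ha
          exact ha.2
      obtain ⟨astar, hastar, hastareq⟩ := Finset.exists_mem_eq_inf' hTne lam
      have hstar1 : astar ∈ Finset.univ.filter (fun a => 0 < lam a) := by
        rw [Finset.mem_filter]
        exact ⟨Finset.mem_univ _, hw astar (List.mem_toFinset.mp hastar)⟩
      have hstar2 : astar ∉ Finset.univ.filter (fun a => 0 < lam' a) := by
        rw [Finset.mem_filter]
        rintro ⟨-, hpos⟩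
        rw [hlam'] at hpos
        simp only at hpos
        rw [if_pos hastar] at hpos
        rw [heps, ← hastareq] at hpos
        linarith
      have hcard' : (Finset.univ.filter (fun a => 0 < lam' a)).card ≤ n := by
        have hss : Finset.univ.filter (fun a => 0 < lam' a) ⊂ Finset.univ.filter (fun a => 0 < lam a) :=
          ⟨hsubset, fun hcontra => hstar2 (hcontra hstar1)⟩
        have := Finset.card_lt_card hss
        omega
      have hih := ih lam' hcons' hnn' hcard'
      have hsplit : ∑ a, g a * lam a = ∑ a, g a * lam' a + eps * ∑ a ∈ T, g a := by
        rw [hlam']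
        simp only [mul_sub]
        rw [Finset.sum_sub_distrib]
        have : ∑ a, g a * (if a ∈ T then eps else 0) = eps * ∑ a ∈ T, g a := by
          have h1 : ∀ a ∈ Finset.univ, g a * (if a ∈ T then eps else 0)
              = (if a ∈ T then g a * eps else 0) := by
            intro a _
            by_cases h : a ∈ T <;> simp [h]
          rw [Finset.sum_congr rfl h1, Finset.sum_ite_mem, Finset.univ_inter, ← Finset.sum_mul,
            mul_comm]
        rw [this]
        ring
      rw [hsplit]
      have := hcyc w
      rw [← hT] at this
      have h2 : 0 ≤ eps * ∑ a ∈ T, g a := mul_nonneg hepspos.le this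
      linarith

lemma stmt14_main {V A : Type} [Fintype V] [Fintype A] [DecidableEq V] [DecidableEq A]
    (s t : A → V) (r : V → EuclideanSpace ℝ (Fin 3))
    (hd : ∀ a : A, r (s a) ≠ r (t a))
    (hdenef : ∀ i : V,
      ∑ a ∈ Finset.univ.filter (fun a => s a = i), (1 + (dist (r (s a)) (r (t a)))⁻¹)
      - ∑ a ∈ Finset.univ.filter (fun a => t a = i), (1 + (dist (r (s a)) (r (t a)))⁻¹) = 0) :
    ∀ I : Finset A, IsWeakCut s t I →
      I.card ≤ Iᶜ.card ∧
      ((∃ w : SimpleCycle s t, ∀ a ∈ w.arrows, a ∉ I) → I.card < Iᶜ.card) := by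
  classical
  intro I hwc
  have hdistpos : ∀ a : A, 0 < dist (r (s a)) (r (t a)) := fun a => dist_pos.mpr (hd a)
  have hinvnn : ∀ a : A, 0 < (dist (r (s a)) (r (t a)))⁻¹ := fun a => inv_pos.mpr (hdistpos a)
  set mu : A → ℝ := fun a => (1 + (dist (r (s a)) (r (t a)))⁻¹)⁻¹ with hmu
  set g : A → ℝ := fun a => if a ∈ I then -mu a else mu a with hg
  set lam0 : A → ℝ := fun a => 1 + (dist (r (s a)) (r (t a)))⁻¹ with hlam0
  have hlam0pos : ∀ a, 0 < lam0 a := fun a => by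
    rw [hlam0]; simp only; linarith [hinvnn a]
  have hlam0ge1 : ∀ a, 1 ≤ lam0 a := fun a => by
    rw [hlam0]; simp only; linarith [hinvnn a]
  have hmulam : ∀ a, mu a * lam0 a = 1 := fun a => by
    rw [hmu, hlam0]; simp only
    exact inv_mul_cancel₀ (ne_of_gt (hlam0pos a))
  have hmupos' : ∀ a, 0 < mu a := fun a => by
    rw [hmu]; simp only
    exact mu_pos (hdistpos a)
  have hcyc : ∀ w : SimpleCycle s t, 0 ≤ ∑ a ∈ w.arrows.toFinset, g a := by
    intro w
    have := cyc_g_nonneg r hd I hwc w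
    rw [hg, hmu]
    exact this
  have main : ∀ lam : A → ℝ, Conserved s t lam → (∀ a, 0 ≤ lam a) → 0 ≤ ∑ a, g a * lam a :=
    fun lam h1 h2 => flow_pairing_nonneg g hcyc (Fintype.card A) lam h1 h2
      (le_of_le_of_eq (Finset.card_le_univ _) Finset.card_univ)
  have hcons0 : Conserved s t lam0 := by
    intro i
    exact (sub_eq_zero.mp (hdenef i)).symm
  have hterm : ∀ a ∈ Finset.univ, g a * lam0 a = if a ∈ I then (-1 : ℝ) else 1 := by
    intro a _
    rw [hg]
    simp only
    by_cases h : a ∈ I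
    · rw [if_pos h, if_pos h, neg_mul, hmulam a]
    · rw [if_neg h, if_neg h, hmulam a]
  have hsumval : ∑ a, (if a ∈ I then (-1 : ℝ) else 1) = (Iᶜ.card : ℝ) - (I.card : ℝ) := by
    rw [← Finset.sum_add_sum_compl I]
    rw [Finset.sum_congr rfl (fun a ha => if_pos ha),
      Finset.sum_congr rfl (fun a ha => if_neg (Finset.mem_compl.mp ha))]
    rw [Finset.sum_const, Finset.sum_const]
    simp only [nsmul_eq_mul, mul_neg, mul_one]
    ring
  have hpair0 := main lam0 hcons0 (fun a => (hlam0pos a).le)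
  rw [Finset.sum_congr rfl hterm, hsumval] at hpair0
  constructor
  · have : (I.card : ℝ) ≤ (Iᶜ.card : ℝ) := by linarith
    exact_mod_cast this
  · rintro ⟨w0, hw0⟩
    set T0 := w0.arrows.toFinset with hT0
    have hT0ne : T0.Nonempty := by
      obtain ⟨a, ha⟩ := List.exists_mem_of_ne_nil w0.arrows w0.nonempty
      exact ⟨a, List.mem_toFinset.mpr ha⟩
    set lam1 : A → ℝ := fun a => lam0 a - (if a ∈ T0 then 1 else 0) with hlam1
    have hcons1 : Conserved s t lam1 := by
      intro i
      rw [hlam1]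
      simp only
      rw [Finset.sum_sub_distrib, Finset.sum_sub_distrib, hcons0 i, indicator_conserved w0 1 i]
    have hnn1 : ∀ a, 0 ≤ lam1 a := by
      intro a
      rw [hlam1]
      simp only
      by_cases h : a ∈ T0
      · rw [if_pos h]
        linarith [hlam0ge1 a]
      · rw [if_neg h, sub_zero]
        exact (hlam0pos a).le
    have hpair1 := main lam1 hcons1 hnn1
    have hsplit : ∑ a, g a * lam0 a = ∑ a, g a * lam1 a + ∑ a ∈ T0, g a := by
      rw [hlam1]
      simp only [mul_sub]
      rw [Finset.sum_sub_distrib]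
      have h1 : ∀ a ∈ Finset.univ, g a * (if a ∈ T0 then (1:ℝ) else 0)
          = (if a ∈ T0 then g a else 0) := by
        intro a _
        by_cases h : a ∈ T0 <;> simp [h]
      rw [Finset.sum_congr rfl h1, Finset.sum_ite_mem, Finset.univ_inter]
      ring
    have hT0pos : 0 < ∑ a ∈ T0, g a := by
      apply Finset.sum_pos
      · intro a ha
        have haI : a ∉ I := hw0 a (List.mem_toFinset.mp ha)
        rw [hg]
        simp only
        rw [if_neg haI]
        exact hmupos' a
      · exact hT0ne
    rw [Finset.sum_congr rfl hterm, hsumval] at hsplit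
    have : (I.card : ℝ) < (Iᶜ.card : ℝ) := by linarith
    exact_mod_cast this

end Aux

/-- If a quiver admits an attractor solution (points in `ℝ³` with distinct endpoints
along arrows satisfying the attractor Denef equations), then every weak cut `I`
satisfies `|I| ≤ |Q₁ − I|`, with strict inequality whenever some simple oriented cycle
contains no arrow of `I`. -/
theorem stmt14 {V A : Type} [Fintype V] [Fintype A] [DecidableEq V] [DecidableEq A]
    (s t : A → V) (r : V → EuclideanSpace ℝ (Fin 3))
    (hd : ∀ a : A, r (s a) ≠ r (t a))
    (hdenef : ∀ i : V,
      ∑ a ∈ Finset.univ.filter (fun a => s a = i), (1 + (dist (r (s a)) (r (t a)))⁻¹)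
      - ∑ a ∈ Finset.univ.filter (fun a => t a = i), (1 + (dist (r (s a)) (r (t a)))⁻¹) = 0) :
    ∀ I : Finset A, IsWeakCut s t I →
      I.card ≤ Iᶜ.card ∧
      ((∃ w : SimpleCycle s t, ∀ a ∈ w.arrows, a ∉ I) → I.card < Iᶜ.card) :=
  stmt14_main s t r hd hdenef
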